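/- Let A be a ring with an ideal I whose Rees ring A ⊕ ⊕_{n≥1} Iⁿtⁿ is left Noetherian. Then I has the left Artin-Rees property: for every finitely generated left A-module M and submodule N of M there exists n ≥ 1 with N ∩ IⁿM ⊆ IN. -/

import Mathlib

universe v

/-- The Rees ring of an ideal `I` of `A`: the subring of the polynomial
ring `A[t]` generated by `A + I·t`. -/
noncomputable def ReesRing (A : Type*) [Ring A] (I : Ideal A) : Subring (Polynomial A) :=
  Subring.closure (Set.range (Polynomial.C : A →+* Polynomial A) ∪
    {p : Polynomial A | ∃ a ∈ I, p = Polynomial.C a * Polynomial.X})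

open Polynomial

section Aux

variable {A : Type*} [Ring A] {I : Ideal A}

lemma ReesAux.pow_zero_eq_top : I ^ 0 = ⊤ := by
  rw [Submodule.pow_zero, Ideal.one_eq_top]

lemma ReesAux.right_mul_mem_pow (hI : ∀ a ∈ I, ∀ b : A, a * b ∈ I) :
    ∀ (a : ℕ) (x : A), x ∈ I ^ a → ∀ b : A, x * b ∈ I ^ a := by
  intro a
  induction a with
  | zero => intro x _ b; rw [ReesAux.pow_zero_eq_top]; exact Submodule.mem_top
  | succ n ih =>
    intro x hx b
    rw [Submodule.pow_succ] at hx ⊢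
    exact Submodule.mul_induction_on hx
      (fun m hm v hv => by rw [mul_assoc]; exact Submodule.mul_mem_mul hm (hI v hv b))
      (fun p q hp hq => by rw [add_mul]; exact add_mem hp hq)

lemma ReesAux.mul_mem_pow_add (hI : ∀ a ∈ I, ∀ b : A, a * b ∈ I) {a b : ℕ} {x y : A}
    (hx : x ∈ I ^ a) (hy : y ∈ I ^ b) : x * y ∈ I ^ (a + b) := by
  induction b generalizing y with
  | zero => rw [Nat.add_zero]; exact ReesAux.right_mul_mem_pow hI a x hx y
  | succ n ih =>
    rw [Submodule.pow_succ] at hy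
    rw [← Nat.add_assoc, Submodule.pow_succ]
    exact Submodule.mul_induction_on hy
      (fun m hm v hv => by rw [← mul_assoc]; exact Submodule.mul_mem_mul (ih hm) hv)
      (fun p q hp hq => by rw [mul_add]; exact add_mem hp hq)

lemma ReesAux.coeff_mem_pow (hI : ∀ a ∈ I, ∀ b : A, a * b ∈ I) {p : Polynomial A}
    (hp : p ∈ ReesRing A I) : ∀ m, p.coeff m ∈ I ^ m := by
  induction hp using Subring.closure_induction with
  | mem x hx =>
    intro m
    rcases hx with ⟨a, rfl⟩ | ⟨a, ha, rfl⟩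
    · rcases m with _ | m
      · rw [ReesAux.pow_zero_eq_top]; exact Submodule.mem_top
      · simp [Polynomial.coeff_C]
    · rcases m with _ | m
      · simp
      · rcases m with _ | m
        · rw [Submodule.pow_one]; simpa [Polynomial.coeff_C_mul] using ha
        · simp [Polynomial.coeff_C_mul, Polynomial.coeff_X]
  | zero => intro m; simp
  | one =>
    intro m
    rcases m with _ | m
    · rw [ReesAux.pow_zero_eq_top]; exact Submodule.mem_top
    · simp [Polynomial.coeff_one]
  | add x y hx hy ihx ihy => intro m; simpa [Polynomial.coeff_add] using add_mem (ihx m) (ihy m)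
  | neg x hx ih => intro m; simpa using neg_mem (ih m)
  | mul x y hx hy ihx ihy =>
    intro m
    rw [Polynomial.coeff_mul]
    refine Submodule.sum_mem _ fun q hq => ?_
    rw [Finset.HasAntidiagonal.mem_antidiagonal] at hq
    have := ReesAux.mul_mem_pow_add hI (ihx q.1) (ihy q.2)
    rwa [hq] at this

lemma ReesAux.C_mul_X_pow_mem : ∀ (n : ℕ) (s : A), s ∈ I ^ n →
    Polynomial.C s * Polynomial.X ^ n ∈ ReesRing A I := by
  intro n
  induction n with
  | zero =>
    intro s _
    rw [pow_zero, mul_one]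
    exact Subring.subset_closure (Or.inl ⟨s, rfl⟩)
  | succ n ih =>
    intro s hs
    rw [Submodule.pow_succ] at hs
    refine Submodule.mul_induction_on (C := fun s => Polynomial.C s * Polynomial.X ^ (n+1) ∈ ReesRing A I)
      hs (fun m hm v hv => ?_) (fun x y hx hy => ?_)
    · have key : Polynomial.C m * Polynomial.X ^ n * (Polynomial.C v * Polynomial.X)
          = Polynomial.C (m * v) * Polynomial.X ^ (n + 1) := by
        rw [← mul_assoc, mul_assoc (Polynomial.C m), Polynomial.X_pow_mul, ← mul_assoc,
          ← Polynomial.C_mul, mul_assoc, ← pow_succ]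
      show Polynomial.C (m * v) * Polynomial.X ^ (n + 1) ∈ ReesRing A I
      rw [← key]
      exact mul_mem (ih m hm) (Subring.subset_closure (Or.inr ⟨v, hv, rfl⟩))
    · show Polynomial.C (x + y) * Polynomial.X ^ (n + 1) ∈ ReesRing A I
      rw [Polynomial.C_add, add_mul]
      exact add_mem hx hy

end Aux

lemma ReesAux.free_case (A : Type*) [Ring A] (I : Ideal A)
    (hI : ∀ a ∈ I, ∀ b : A, a * b ∈ I)
    (hRees : IsNoetherianRing (ReesRing A I)) (k : ℕ)
    (N' : Submodule A (Fin k → A)) :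
    ∃ n : ℕ, 1 ≤ n ∧ N' ⊓ I ^ n • (⊤ : Submodule A (Fin k → A)) ≤ I • N' := by
  classical
  set R := ReesRing A I with hR
  set Q : ℕ → Submodule A (Fin k → A) := fun n => N' ⊓ I ^ n • ⊤ with hQ
  set cv : (Fin k → Polynomial A) → ℕ → (Fin k → A) := fun v n i => (v i).coeff n with hcv
  have cv_zero : ∀ n, cv (0 : Fin k → Polynomial A) n = 0 := by
    intro n; funext i; simp [hcv]
  have cv_add : ∀ v w n, cv (v + w) n = cv v n + cv w n := by
    intro v w n; funext i; simp [hcv]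
  have key : ∀ (a b : ℕ) (c : A), c ∈ I ^ a → ∀ x ∈ Q b, c • x ∈ Q (a + b) := by
    intro a b c hc x hx
    refine Submodule.mem_inf.mpr ⟨N'.smul_mem c (Submodule.mem_inf.mp hx).1, ?_⟩
    refine Submodule.smul_induction_on
      (p := fun y => c • y ∈ (I ^ (a + b) • ⊤ : Submodule A (Fin k → A)))
      (Submodule.mem_inf.mp hx).2 (fun r hr n _ => ?_) (fun y z hy hz => ?_)
    · show c • (r • n) ∈ (I ^ (a + b) • ⊤ : Submodule A (Fin k → A))
      rw [smul_smul]
      exact Submodule.smul_mem_smul (ReesAux.mul_mem_pow_add hI hc hr) Submodule.mem_top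
    · show c • (y + z) ∈ (I ^ (a + b) • ⊤ : Submodule A (Fin k → A))
      rw [smul_add]; exact add_mem hy hz
  have cv_smul : ∀ (r : R) (v : Fin k → Polynomial A) (n : ℕ),
      cv (r • v) n = ∑ q ∈ Finset.HasAntidiagonal.antidiagonal n, ((r : Polynomial A).coeff q.1) • cv v q.2 := by
    intro r v n
    funext i
    have : ((r • v) i) = (r : Polynomial A) * v i := rfl
    simp only [hcv, this, Polynomial.coeff_mul, Finset.sum_apply, Pi.smul_apply, smul_eq_mul]
  have hsmul : ∀ (r : R) (v : Fin k → Polynomial A), (∀ m, cv v m ∈ Q m) →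
      ∀ n, cv (r • v) n ∈ Q n := by
    intro r v hv n
    rw [cv_smul]
    refine Submodule.sum_mem _ fun q hq => ?_
    rw [Finset.HasAntidiagonal.mem_antidiagonal] at hq
    have := key q.1 q.2 _ (ReesAux.coeff_mem_pow hI r.2 q.1) _ (hv q.2)
    rwa [hq] at this
  set W : Submodule R (Fin k → Polynomial A) :=
    { carrier := {v | ∀ n, cv v n ∈ Q n}
      add_mem' := by
        intro v w hv hw n
        rw [cv_add]
        exact add_mem (hv n) (hw n)
      zero_mem' := by
        intro n
        rw [cv_zero]
        exact zero_mem _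
      smul_mem' := fun r v hv => hsmul r v hv } with hWdef
  have memW : ∀ v : Fin k → Polynomial A, v ∈ W ↔ ∀ n, cv v n ∈ Q n := fun v => Iff.rfl
  set e : Fin k → (Fin k → Polynomial A) := fun i => Pi.single i 1 with he
  have const_mem : ∀ m : Fin k → A,
      (fun i => (Polynomial.C (m i))) ∈ Submodule.span R (Set.range e) := by
    intro m
    have hrepr : (fun i => (Polynomial.C (m i)))
        = ∑ j : Fin k, (⟨Polynomial.C (m j),
            Subring.subset_closure (Or.inl ⟨m j, rfl⟩)⟩ : R) • e j := by
      funext i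
      have hsm : ∀ (r : R) (w : Fin k → Polynomial A) (i : Fin k),
          (r • w) i = (r : Polynomial A) * w i := fun _ _ _ => rfl
      simp only [Finset.sum_apply, hsm, he, Pi.single_apply]
      simp [Finset.sum_ite_eq, Finset.mem_univ, eq_comm]
    rw [hrepr]
    exact Submodule.sum_mem _ fun j _ =>
      Submodule.smul_mem _ _ (Submodule.subset_span ⟨j, rfl⟩)
  have mono_mem : ∀ (n : ℕ) (x : Fin k → A), x ∈ (I ^ n • ⊤ : Submodule A (Fin k → A)) →
      (fun i => Polynomial.C (x i) * Polynomial.X ^ n) ∈ Submodule.span R (Set.range e) := by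
    intro n x hx
    refine Submodule.smul_induction_on
      (p := fun x => (fun i => Polynomial.C (x i) * Polynomial.X ^ n)
        ∈ Submodule.span R (Set.range e))
      hx (fun r hr m _ => ?_) (fun y z hy hz => ?_)
    · have heq : (fun i => Polynomial.C ((r • m) i) * Polynomial.X ^ n)
          = (⟨Polynomial.C r * Polynomial.X ^ n, ReesAux.C_mul_X_pow_mem n r hr⟩ : R)
            • (fun i => Polynomial.C (m i)) := by
        funext i
        show Polynomial.C (r * m i) * Polynomial.X ^ n
          = (Polynomial.C r * Polynomial.X ^ n) * Polynomial.C (m i)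
        rw [mul_assoc, Polynomial.X_pow_mul, ← mul_assoc, ← Polynomial.C_mul]
      show (fun i => Polynomial.C ((r • m) i) * Polynomial.X ^ n)
        ∈ Submodule.span R (Set.range e)
      rw [heq]
      exact Submodule.smul_mem _ _ (const_mem m)
    · have heq : (fun i => Polynomial.C ((y + z) i) * Polynomial.X ^ n)
          = (fun i => Polynomial.C (y i) * Polynomial.X ^ n)
            + (fun i => Polynomial.C (z i) * Polynomial.X ^ n) := by
        funext i
        simp [add_mul]
      show (fun i => Polynomial.C ((y + z) i) * Polynomial.X ^ n)
        ∈ Submodule.span R (Set.range e)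
      rw [heq]; exact add_mem hy hz
  have hWle : W ≤ Submodule.span R (Set.range e) := by
    intro v hv
    set D := (Finset.univ.sup fun i => (v i).natDegree) + 1 with hD
    have hdeg : ∀ i, (v i).natDegree < D :=
      fun i => Nat.lt_succ_of_le
        (Finset.le_sup (f := fun i => (v i).natDegree) (Finset.mem_univ i))
    have hrepr : v = ∑ n ∈ Finset.range D,
        (fun i => Polynomial.C (cv v n i) * Polynomial.X ^ n) := by
      funext i
      rw [Finset.sum_apply]
      conv_lhs => rw [Polynomial.as_sum_range' (v i) D (hdeg i)]
      exact Finset.sum_congr rfl fun n _ => (Polynomial.C_mul_X_pow_eq_monomial).symm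
    rw [hrepr]
    exact Submodule.sum_mem _ fun n _ =>
      mono_mem n (cv v n) (Submodule.mem_inf.mp (hv n)).2
  haveI : IsNoetherian R (Submodule.span R (Set.range e)) :=
    isNoetherian_of_fg_of_noetherian _
      ⟨(Set.finite_range e).toFinset, by simp⟩
  have hWfg : W.FG := by
    have h1 : (W.comap (Submodule.span R (Set.range e)).subtype).FG :=
      IsNoetherian.noetherian _
    have h2 := h1.map (Submodule.span R (Set.range e)).subtype
    rwa [Submodule.map_comap_subtype, inf_eq_right.mpr hWle] at h2
  obtain ⟨S, hSspan⟩ := hWfg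
  set d := S.sup (fun w => Finset.univ.sup fun i => (w i).natDegree) with hd
  have main : ∀ (v : Fin k → Polynomial A),
      v ∈ Submodule.span R (↑S : Set (Fin k → Polynomial A)) →
      (∀ m, cv v m ∈ Q m) ∧ ∀ m, d < m → cv v m ∈ I • N' := by
    intro v hv
    induction hv using Submodule.span_induction with
    | mem x hx =>
      have hxW : x ∈ W := hSspan ▸ Submodule.subset_span hx
      refine ⟨(memW x).mp hxW, fun m hm => ?_⟩
      have hz : cv x m = 0 := by
        funext i
        refine Polynomial.coeff_eq_zero_of_natDegree_lt (lt_of_le_of_lt ?_ hm)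
        exact le_trans (Finset.le_sup (f := fun i => (x i).natDegree) (Finset.mem_univ i))
          (Finset.le_sup (f := fun w => Finset.univ.sup fun i => (w i).natDegree)
            (Finset.mem_coe.mp hx))
      rw [hz]; exact zero_mem _
    | zero =>
      exact ⟨fun n => by rw [cv_zero]; exact zero_mem _,
        fun m _ => by rw [cv_zero]; exact zero_mem _⟩
    | add x y hx hy ihx ihy =>
      refine ⟨fun n => by rw [cv_add]; exact add_mem (ihx.1 n) (ihy.1 n),
        fun m hm => by rw [cv_add]; exact add_mem (ihx.2 m hm) (ihy.2 m hm)⟩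
    | smul r x hx ih =>
      refine ⟨hsmul r x ih.1, fun m hm => ?_⟩
      rw [cv_smul]
      refine Submodule.sum_mem _ fun q hq => ?_
      rw [Finset.HasAntidiagonal.mem_antidiagonal] at hq
      by_cases hb : d < q.2
      · exact Submodule.smul_mem _ _ (ih.2 q.2 hb)
      · push_neg at hb
        have ha : q.1 ≠ 0 := by
          intro h0
          rw [h0, Nat.zero_add] at hq
          rw [hq] at hb
          exact absurd hm (not_lt.mpr hb)
        exact Submodule.smul_mem_smul
          (Ideal.pow_le_self ha (ReesAux.coeff_mem_pow hI r.2 q.1))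
          (Submodule.mem_inf.mp (ih.1 q.2)).1
  refine ⟨d + 1, Nat.le_add_left 1 d, ?_⟩
  intro x hx
  have hx' : x ∈ Q (d + 1) := hx
  have hcvv : ∀ n, cv (fun i => Polynomial.C (x i) * Polynomial.X ^ (d + 1)) n
      = if n = d + 1 then x else 0 := by
    intro n
    funext i
    by_cases hn : n = d + 1 <;>
      simp [hcv, Polynomial.coeff_C_mul, Polynomial.coeff_X_pow, hn]
  have hvW : (fun i => Polynomial.C (x i) * Polynomial.X ^ (d + 1)) ∈ W := by
    rw [memW]
    intro n
    rw [hcvv n]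
    split
    · next h => rw [h]; exact hx'
    · exact zero_mem _
  have hfin := (main _ (by rw [hSspan]; exact hvW)).2 (d + 1) (Nat.lt_succ_self d)
  rw [hcvv (d + 1)] at hfin
  simpa using hfin

theorem stmt12 (A : Type*) [Ring A] (I : Ideal A)
    (hItwoSided : ∀ a ∈ I, ∀ b : A, a * b ∈ I)
    (hRees : IsNoetherianRing (ReesRing A I)) :
    ∀ (M : Type v) [AddCommGroup M] [Module A M] [Module.Finite A M]
      (N : Submodule A M), ∃ n : ℕ, 1 ≤ n ∧ N ⊓ (I ^ n • (⊤ : Submodule A M)) ≤ I • N := by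
  intro M _ _ _ N
  obtain ⟨k, f, hf⟩ := Module.Finite.exists_fin' A M
  obtain ⟨n, hn1, hn⟩ := ReesAux.free_case A I hItwoSided hRees k (N.comap f)
  refine ⟨n, hn1, ?_⟩
  intro x hx
  obtain ⟨hxN, hxI⟩ := Submodule.mem_inf.mp hx
  have htop : (⊤ : Submodule A M) = Submodule.map f ⊤ := by
    rw [Submodule.map_top, LinearMap.range_eq_top.mpr hf]
  rw [htop, ← Submodule.map_smul''] at hxI
  obtain ⟨y, hy, rfl⟩ := hxI
  have hyN : y ∈ N.comap f := hxN
  have h1 : y ∈ I • N.comap f := hn (Submodule.mem_inf.mpr ⟨hyN, hy⟩)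
  have h2 : f y ∈ Submodule.map f (I • N.comap f) := ⟨y, h1, rfl⟩
  rw [Submodule.map_smul''] at h2
  exact smul_mono_right _ (Submodule.map_comap_le f N) h2
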